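/- In the Mussa–Rosen model with the fixed-market-share collusive scheme, the top firm n satisfies π_n^d = (p_n^d − c_n)²/(v_n − v_{n-1}) and π_n^* = (p_n^* − c_n)²/(v_n − v_{n-1}), where p_n^d = p̂_n(p_{n-1}^c) and p_n^* = p̂_n(p_{n-1}^*), and its collusive profit equals π_n^c = (Δ + p_n^* − c_n)·(θ̄(v_n−v_{n-1}) − (p_n^* − p_{n-1}^*))/(v_n−v_{n-1}); consequently, if Δ = p_1^c − p_1^* > 0 and p_n^* − c_n > 0, its critical discount factor equals δ̄_n = (π_n^d − π_n^c)/(π_n^d − π_n^*) = ((1/4)Δ)/((1/4)Δ + (p_n^* − c_n)). -/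

import Mathlib

/-- Mussa–Rosen model with the fixed-market-share collusive scheme: the top firm
satisfies `π_n^d = (p_n^d−c_n)²/(v_n−v_{n-1})`, `π_n^* = (p_n^*−c_n)²/(v_n−v_{n-1})`
and `π_n^c = (Δ+p_n^*−c_n)·(θ̄(v_n−v_{n-1})−(p_n^*−p_{n-1}^*))/(v_n−v_{n-1})`;
consequently, with `Δ > 0` and a positive margin, its critical discount factor
equals `((1/4)Δ)/((1/4)Δ + (p_n^*−c_n))`. -/
theorem top_firm_critical_discount_factor
    (vprev vn cn θhi pmStar pStar Δ pd πd πc πst : ℝ)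
    (hv0 : 0 < vprev) (hv : vprev < vn)
    (hΔ : 0 < Δ) (hm : 0 < pStar - cn)
    (hnash : pStar = (1/2) * (pmStar + cn + θhi * (vn - vprev)))
    (hpd : pd = (1/2) * ((pmStar + Δ) + cn + θhi * (vn - vprev)))
    (hπd : πd = (pd - cn) * (θhi - (pd - (pmStar + Δ)) / (vn - vprev)))
    (hπc : πc = ((pStar + Δ) - cn) * (θhi - ((pStar + Δ) - (pmStar + Δ)) / (vn - vprev)))
    (hπst : πst = (pStar - cn) * (θhi - (pStar - pmStar) / (vn - vprev))) :
    πd = (pd - cn) ^ 2 / (vn - vprev)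
    ∧ πst = (pStar - cn) ^ 2 / (vn - vprev)
    ∧ πc = (Δ + pStar - cn) * ((θhi * (vn - vprev) - (pStar - pmStar)) / (vn - vprev))
    ∧ (πd - πc) / (πd - πst) = ((1/4) * Δ) / ((1/4) * Δ + (pStar - cn)) := by
  have hV : (0:ℝ) < vn - vprev := by linarith
  have hV' : vn - vprev ≠ 0 := ne_of_gt hV
  have hθ : θhi * (vn - vprev) = 2*pStar - pmStar - cn := by linarith
  have hpd' : pd = pStar + Δ/2 := by rw [hpd]; linarith [hθ]
  have key1 : θhi - (pStar + Δ/2 - (pmStar + Δ)) / (vn - vprev)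
      = (pStar + Δ/2 - cn) / (vn - vprev) := by
    rw [sub_eq_iff_eq_add, ← add_div, eq_div_iff hV']
    linarith
  have key2 : θhi - (pStar - pmStar) / (vn - vprev)
      = (pStar - cn) / (vn - vprev) := by
    rw [sub_eq_iff_eq_add, ← add_div, eq_div_iff hV']
    linarith
  have h1 : πd = (pd - cn) ^ 2 / (vn - vprev) := by
    rw [hπd, hpd', key1]; ring
  have h2 : πst = (pStar - cn) ^ 2 / (vn - vprev) := by
    rw [hπst, key2]; ring
  have hsimp : (pStar + Δ) - (pmStar + Δ) = pStar - pmStar := by ring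
  have h3 : πc = (Δ + pStar - cn) * ((θhi * (vn - vprev) - (pStar - pmStar)) / (vn - vprev)) := by
    rw [hπc, hsimp, key2, hθ]
    have : (2 * pStar - pmStar - cn - (pStar - pmStar)) = pStar - cn := by ring
    rw [this]; ring
  have hπc' : πc = (Δ + pStar - cn) * ((pStar - cn) / (vn - vprev)) := by
    rw [hπc, hsimp, key2]; ring
  have h4 : (πd - πc) / (πd - πst) = ((1/4) * Δ) / ((1/4) * Δ + (pStar - cn)) := by
    rw [h1, h2, hπc', hpd']
    have hb : (0:ℝ) < (1/4) * Δ + (pStar - cn) := by linarith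
    have hnum : (pStar + Δ/2 - cn) ^ 2 / (vn - vprev)
        - (Δ + pStar - cn) * ((pStar - cn) / (vn - vprev))
        = Δ * ((1/4) * Δ) / (vn - vprev) := by ring
    have hden : (pStar + Δ/2 - cn) ^ 2 / (vn - vprev) - (pStar - cn) ^ 2 / (vn - vprev)
        = Δ * ((1/4) * Δ + (pStar - cn)) / (vn - vprev) := by ring
    have hdpos : (0:ℝ) < Δ * ((1/4) * Δ + (pStar - cn)) / (vn - vprev) :=
      div_pos (mul_pos hΔ hb) hV
    rw [hnum, hden, div_eq_div_iff (ne_of_gt hdpos) (ne_of_gt hb)]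
    field_simp
  exact ⟨h1, h2, h3, h4⟩
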